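/- Let L be a sectionally complemented modular lattice. An element u ∈ L with a complement is neutral if and only if for all x ∈ L, x subperspective to u and x ∧ u = 0 imply x = 0. -/
import Mathlib


variable {L : Type*} [Lattice L] [BoundedOrder L]

/-- Perspectivity: `x ∼ y` iff they have a common complement-like axis `z`. -/
def Perspective (x y : L) : Prop :=
  ∃ z : L, x ⊔ z = y ⊔ z ∧ x ⊓ z = ⊥ ∧ y ⊓ z = ⊥

/-- Subperspectivity: `x ≲ u`. -/
def Subperspective (x u : L) : Prop :=
  ∃ z : L, x ⊓ z = ⊥ ∧ x ⊔ z ≤ u ⊔ z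

/-- An element `u` of a lattice is neutral iff every triple `{u, x, y}`
generates a distributive sublattice; equivalently (Grätzer), the median
equality holds for every `x`, `y`. -/
def IsNeutralElt (u : L) : Prop :=
  ∀ x y : L, (u ⊓ x) ⊔ (x ⊓ y) ⊔ (y ⊓ u) = (u ⊔ x) ⊓ (x ⊔ y) ⊓ (y ⊔ u)

/-- In a sectionally complemented modular lattice, a
complemented element `u` is neutral iff `x ≲ u` and `x ⊓ u = ⊥` imply `x = ⊥`. -/
theorem stmt18 [IsModularLattice L]
    (hsc : ∀ a b : L, b ≤ a → ∃ c : L, b ⊓ c = ⊥ ∧ b ⊔ c = a)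
    (u v : L) (hcompl : u ⊓ v = ⊥ ∧ u ⊔ v = ⊤) :
    IsNeutralElt u ↔
      ∀ x : L, Subperspective x u → x ⊓ u = ⊥ → x = ⊥ := by
  obtain ⟨huv, huv'⟩ := hcompl
  constructor
  · intro hn x hsp hxu
    obtain ⟨z, hxz, hle⟩ := hsp
    have h := hn x z
    have hx : x ≤ (u ⊔ x) ⊓ (x ⊔ z) ⊓ (z ⊔ u) :=
      le_inf (le_inf le_sup_right le_sup_left)
        (le_trans le_sup_left (hle.trans (by rw [sup_comm])))
    rw [← h, inf_comm u x, hxu, hxz, bot_sup_eq, bot_sup_eq] at hx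
    have : x ≤ u := hx.trans inf_le_right
    rw [← hxu, inf_eq_left.mpr this]
  · intro h x y
    -- decomposition lemma
    have decomp : ∀ t : L, (t ⊓ u) ⊔ (t ⊓ v) = t := by
      intro t
      set a := (t ⊓ u) ⊔ (t ⊓ v) with ha
      have hat : a ≤ t := sup_le inf_le_left inf_le_left
      obtain ⟨c, hac, hact⟩ := hsc t a hat
      have hct : c ≤ t := le_trans le_sup_right hact.le
      have hcu : c ⊓ u = ⊥ := by
        have h1 : c ⊓ u ≤ a ⊓ c :=
          le_inf (le_trans (inf_le_inf_right u hct) (le_sup_left)) inf_le_left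
        exact le_bot_iff.mp (hac ▸ h1)
      have hcv : c ⊓ v = ⊥ := by
        have h1 : c ⊓ v ≤ a ⊓ c :=
          le_inf (le_trans (inf_le_inf_right v hct) (le_sup_right)) inf_le_left
        exact le_bot_iff.mp (hac ▸ h1)
      have hc : c = ⊥ := h c ⟨v, hcv, by rw [huv']; exact le_top⟩ hcu
      rw [hc, sup_bot_eq] at hact
      exact hact
    -- projection lemmas
    have projU : ∀ s t : L, s ≤ u → t ≤ v → (s ⊔ t) ⊓ u = s := by
      intro s t hs ht
      rw [sup_inf_assoc_of_le t hs]
      have : t ⊓ u ≤ ⊥ := huv ▸ le_inf inf_le_right (le_trans inf_le_left ht)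
      rw [le_bot_iff.mp this, sup_bot_eq]
    have projV : ∀ s t : L, s ≤ u → t ≤ v → (s ⊔ t) ⊓ v = t := by
      intro s t hs ht
      rw [sup_comm, sup_inf_assoc_of_le s ht]
      have : s ⊓ v ≤ ⊥ := huv ▸ le_inf (le_trans inf_le_left hs) inf_le_right
      rw [le_bot_iff.mp this, sup_bot_eq]
    -- joins distribute
    have supU : ∀ s t : L, (s ⊔ t) ⊓ u = (s ⊓ u) ⊔ (t ⊓ u) := by
      intro s t
      have : s ⊔ t = ((s ⊓ u) ⊔ (t ⊓ u)) ⊔ ((s ⊓ v) ⊔ (t ⊓ v)) := by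
        rw [sup_sup_sup_comm, decomp, decomp]
      rw [this]
      exact projU _ _ (sup_le inf_le_right inf_le_right)
        (sup_le inf_le_right inf_le_right)
    set N := (u ⊔ x) ⊓ (x ⊔ y) ⊓ (y ⊔ u) with hN
    set M := (u ⊓ x) ⊔ (x ⊓ y) ⊔ (y ⊓ u) with hM
    have hMN : M ≤ N := by
      refine sup_le (sup_le ?_ ?_) ?_
      · exact le_inf (le_inf (inf_le_left.trans le_sup_left)
          (inf_le_right.trans le_sup_left)) (inf_le_left.trans le_sup_right)
      · exact le_inf (le_inf (inf_le_left.trans le_sup_right)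
          (inf_le_left.trans le_sup_left)) (inf_le_right.trans le_sup_left)
      · exact le_inf (le_inf (inf_le_right.trans le_sup_left)
          (inf_le_left.trans le_sup_right)) (inf_le_left.trans le_sup_left)
    have hNu : N ⊓ u ≤ M := by
      have h1 : N ⊓ u ≤ (x ⊔ y) ⊓ u :=
        inf_le_inf_right u (le_trans inf_le_left inf_le_right)
      rw [supU x y] at h1
      calc N ⊓ u ≤ (x ⊓ u) ⊔ (y ⊓ u) := h1
        _ ≤ M := sup_le (le_sup_of_le_left (le_sup_of_le_left (inf_comm x u).le))
            le_sup_right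
    have key : ∀ t : L, (u ⊔ t) ⊓ v = t ⊓ v := by
      intro t
      have h1 : u ⊔ t = u ⊔ (t ⊓ v) := by
        conv_lhs => rw [← decomp t]
        rw [inf_comm t u, ← sup_assoc, sup_inf_self]
      rw [h1, projV u (t ⊓ v) le_rfl inf_le_right]
    have hNv : N ⊓ v ≤ M := by
      have hx' : N ⊓ v ≤ x := by
        have := inf_le_inf_right v (show N ≤ u ⊔ x from inf_le_left.trans inf_le_left)
        rw [key x] at this
        exact this.trans inf_le_left
      have hy' : N ⊓ v ≤ y := by
        have h2 : (y ⊔ u) ⊓ v = y ⊓ v := by rw [sup_comm y u, key y]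
        have := inf_le_inf_right v (inf_le_right : N ≤ y ⊔ u)
        rw [h2] at this
        exact this.trans inf_le_left
      exact le_trans (le_inf hx' hy') (le_sup_of_le_left le_sup_right)
    have hNle : N ≤ M := by
      calc N = (N ⊓ u) ⊔ (N ⊓ v) := (decomp N).symm
        _ ≤ M := sup_le hNu hNv
    exact le_antisymm hMN hNle
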